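/- Let s ≥ 1 and n ≥ 2s+2 be integers. Then the spectral radius of the graph K_s ∨ (K_{n−2s−1} + (s+1)K_1) is the largest root of the cubic polynomial P(x) = x³ − (n−s−3)x² − (s²+n−2)x − 2s³ + ns² − 4s² + ns − 2s. -/

import Mathlib

open scoped Classical
open Finset

/-- The spectral radius of a finite simple graph: the largest eigenvalue (as the
supremum of the set of real eigenvalues) of its adjacency matrix over `ℝ`. -/
noncomputable def specRad {V : Type*} [Fintype V] [DecidableEq V] (G : SimpleGraph V) : ℝ :=
  sSup {x : ℝ | Module.End.HasEigenvalue
    (Matrix.toLin' (Matrix.of fun i j => if G.Adj i j then (1 : ℝ) else 0)) x}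

/-- The graph `K_a ∨ (K_b + c·K_1)`: a clique of size `a` joined to the disjoint
union of a clique of size `b` and `c` isolated vertices. -/
def jGraph (a b c : ℕ) : SimpleGraph (Fin (a + b + c)) :=
  SimpleGraph.fromRel (fun x y => (x : ℕ) < a ∨ ((x : ℕ) < a + b ∧ (y : ℕ) < a + b))

/-- `f` is a fractional matching of `G`: `0 ≤ f e ≤ 1` on edges and the sum of `f`
over the edges incident with any vertex is at most `1`. -/
def IsFracMatching {V : Type*} [Fintype V] [DecidableEq V] (G : SimpleGraph V)
    (f : Sym2 V → ℝ) : Prop :=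
  (∀ e ∈ G.edgeFinset, 0 ≤ f e ∧ f e ≤ 1) ∧
    ∀ v : V, ∑ e ∈ G.edgeFinset, (if v ∈ e then f e else 0) ≤ 1

/-- The fractional matching number `μ_f(G)`. -/
noncomputable def fracNu {V : Type*} [Fintype V] [DecidableEq V] (G : SimpleGraph V) : ℝ :=
  sSup {x : ℝ | ∃ f : Sym2 V → ℝ, IsFracMatching G f ∧ x = ∑ e ∈ G.edgeFinset, f e}

/-- `i(G - S)`: the number of isolated vertices of the graph obtained from `G` by
deleting the vertices of `S`. -/
noncomputable def isoCount {V : Type*} [Fintype V] (G : SimpleGraph V) (S : Finset V) : ℕ :=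
  (Finset.univ.filter (fun v => v ∉ S ∧ ∀ u, G.Adj v u → u ∈ S)).card

/-- `G` has a spanning subgraph each of whose connected components is isomorphic
either to `K_2` or to a cycle `C_m` with `m ≥ 3`. -/
def HasK2CycleFactor {V : Type*} (G : SimpleGraph V) : Prop :=
  ∃ H : SimpleGraph V, H ≤ G ∧ ∀ c : H.ConnectedComponent,
    Nonempty (H.induce c.supp ≃g (⊤ : SimpleGraph (Fin 2))) ∨
      ∃ m : ℕ, 3 ≤ m ∧ Nonempty (H.induce c.supp ≃g SimpleGraph.cycleGraph m)

/-- `G` has a `{K_{1,1}, K_{1,2}, …, K_{1,k}}`-factor: a spanning subgraph each of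
whose connected components is a star with between `1` and `k` leaves. -/
def HasStarFactor {V : Type*} (k : ℕ) (G : SimpleGraph V) : Prop :=
  ∃ H : SimpleGraph V, H ≤ G ∧ ∀ c : H.ConnectedComponent,
    ∃ j : ℕ, 1 ≤ j ∧ j ≤ k ∧
      Nonempty (H.induce c.supp ≃g completeBipartiteGraph (Fin 1) (Fin j))

/-- The spectral radius of a real square matrix: the supremum of the moduli of its
complex eigenvalues. -/
noncomputable def matSpecRad {n : ℕ} (A : Matrix (Fin n) (Fin n) ℝ) : ℝ :=
  sSup {r : ℝ | ∃ μ : ℂ,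
    Module.End.HasEigenvalue (Matrix.toLin' (A.map (Complex.ofReal : ℝ → ℂ))) μ ∧
    r = ‖μ‖}

set_option maxHeartbeats 1600000

lemma jGraph_adj' (a b c : ℕ) (x y : Fin (a+b+c)) :
    (jGraph a b c).Adj x y ↔ x ≠ y ∧ ((x:ℕ) < a ∨ (y:ℕ) < a ∨ ((x:ℕ) < a+b ∧ (y:ℕ) < a+b)) := by
  simp only [jGraph, SimpleGraph.fromRel_adj]
  tauto

lemma blockSum {N : ℕ} (T : Finset (Fin N)) (u : Fin N → ℝ) (i : Fin N) :
    ∑ j ∈ T, (if i ≠ j then u j else 0) = (∑ j ∈ T, u j) - (if i ∈ T then u i else 0) := by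
  rw [← Finset.sum_ite_eq T i u, ← Finset.sum_sub_distrib]
  apply Finset.sum_congr rfl
  intro j hj
  by_cases h : i = j <;> simp [h]

lemma sum_filter_fin (N : ℕ) (p : ℕ → Prop) [DecidablePred p] (g : ℕ → ℝ) :
    ∑ j ∈ (univ : Finset (Fin N)).filter (fun j : Fin N => p (j:ℕ)), g (j:ℕ)
      = ∑ k ∈ (Finset.range N).filter p, g k := by
  rw [Finset.sum_filter, Finset.sum_filter]
  exact Fin.sum_univ_eq_sum_range (fun k => if p k then g k else 0) N

lemma card_filter_fin (N : ℕ) (p : ℕ → Prop) [DecidablePred p] :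
    ((univ : Finset (Fin N)).filter (fun j : Fin N => p (j:ℕ))).card = ((Finset.range N).filter p).card := by
  rw [Finset.card_filter, Finset.card_filter]
  exact Fin.sum_univ_eq_sum_range (fun k => if p k then 1 else 0) N

lemma mulVec_jGraph (s b c : ℕ) (u : Fin (s+b+c) → ℝ) (i : Fin (s+b+c)) :
    ((Matrix.of fun x y => if (jGraph s b c).Adj x y then (1:ℝ) else 0).mulVec u) i
      = (if (i:ℕ) < s + b
          then (∑ j ∈ (univ : Finset (Fin (s+b+c))).filter (fun j : Fin (s+b+c) => (j:ℕ) < s + b), u j) - u i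
          else ∑ j ∈ (univ : Finset (Fin (s+b+c))).filter (fun j : Fin (s+b+c) => (j:ℕ) < s), u j)
        + (if (i:ℕ) < s then ∑ j ∈ (univ : Finset (Fin (s+b+c))).filter (fun j : Fin (s+b+c) => ¬ (j:ℕ) < s + b), u j else 0) := by
  have expand : ((Matrix.of fun x y => if (jGraph s b c).Adj x y then (1:ℝ) else 0).mulVec u) i
      = ∑ j : Fin (s+b+c), (if (jGraph s b c).Adj i j then u j else 0) := by
    simp [Matrix.mulVec, dotProduct, ite_mul]
  rw [expand]
  by_cases hiA : (i:ℕ) < s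
  · have hiAB : (i:ℕ) < s + b := by omega
    have hcond : ∀ j : Fin (s+b+c), (if (jGraph s b c).Adj i j then u j else 0)
        = if i ≠ j then u j else 0 := by
      intro j
      apply if_congr _ rfl rfl
      rw [jGraph_adj']
      constructor
      · rintro ⟨h, -⟩; exact h
      · intro h; exact ⟨h, Or.inl hiA⟩
    simp only [hcond]
    rw [blockSum]
    rw [← Finset.sum_filter_add_sum_filter_not univ (fun j : Fin (s+b+c) => (j:ℕ) < s + b) u]
    simp [hiA, hiAB]
    ring
  · by_cases hiB : (i:ℕ) < s + b
    · have hcond : ∀ j : Fin (s+b+c), (if (jGraph s b c).Adj i j then u j else 0)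
          = if (j:ℕ) < s + b then (if i ≠ j then u j else 0) else 0 := by
        intro j
        by_cases hj : (j:ℕ) < s + b
        · rw [if_pos hj]
          apply if_congr _ rfl rfl
          rw [jGraph_adj']
          constructor
          · rintro ⟨h, -⟩; exact h
          · intro h; exact ⟨h, Or.inr (Or.inr ⟨hiB, hj⟩)⟩
        · rw [if_neg hj, if_neg]
          rw [jGraph_adj']
          rintro ⟨-, h⟩
          omega
      simp only [hcond]
      rw [← Finset.sum_filter]
      rw [blockSum]
      have : i ∈ (univ : Finset (Fin (s+b+c))).filter (fun j : Fin (s+b+c) => (j:ℕ) < s + b) := by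
        simp [hiB]
      simp [this, hiA, hiB]
    · have hcond : ∀ j : Fin (s+b+c), (if (jGraph s b c).Adj i j then u j else 0)
          = if (j:ℕ) < s then (if i ≠ j then u j else 0) else 0 := by
        intro j
        by_cases hj : (j:ℕ) < s
        · rw [if_pos hj]
          apply if_congr _ rfl rfl
          rw [jGraph_adj']
          constructor
          · rintro ⟨h, -⟩; exact h
          · intro h; exact ⟨h, Or.inr (Or.inl hj)⟩
        · rw [if_neg hj, if_neg]
          rw [jGraph_adj']
          rintro ⟨-, h⟩
          omega
      simp only [hcond]
      rw [← Finset.sum_filter]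
      rw [blockSum]
      have : i ∉ (univ : Finset (Fin (s+b+c))).filter (fun j : Fin (s+b+c) => (j:ℕ) < s) := by
        simp; omega
      simp [this, hiA, hiB]

noncomputable def polyP (s n : ℕ) (x : ℝ) : ℝ :=
  x ^ 3 - ((n : ℝ) - s - 3) * x ^ 2 - ((s : ℝ) ^ 2 + (n : ℝ) - 2) * x
    - 2 * (s : ℝ) ^ 3 + (n : ℝ) * (s : ℝ) ^ 2 - 4 * (s : ℝ) ^ 2
    + (n : ℝ) * (s : ℝ) - 2 * (s : ℝ)


set_option maxHeartbeats 1000000 in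
lemma partI (s b n : ℕ) (hs : 1 ≤ s) (hb1 : 1 ≤ b)
    (hnR : (n:ℝ) = (b:ℝ) + 2*(s:ℝ) + 1) (β : ℝ) (hβroot : polyP s n β = 0) :
    Module.End.HasEigenvalue (Matrix.toLin'
      (Matrix.of fun i j => if (jGraph s b (s+1)).Adj i j then (1:ℝ) else 0)) β := by
  have hfilter1 : (Finset.range (s+b+(s+1))).filter (fun k => k < s) = Finset.range s := by
    ext k; simp only [Finset.mem_filter, Finset.mem_range]; omega
  have hfilter2 : (Finset.range (s+b+(s+1))).filter (fun k => k < s + b) = Finset.range (s+b) := by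
    ext k; simp only [Finset.mem_filter, Finset.mem_range]; omega
  have hfilter3 : (Finset.range (s+b+(s+1))).filter (fun k => ¬ k < s + b)
      = Finset.Ico (s+b) (s+b+(s+1)) := by
    ext k; simp only [Finset.mem_filter, Finset.mem_range, Finset.mem_Ico]; omega
  set M3 : Matrix (Fin 3) (Fin 3) ℝ :=
    !![β - ((s:ℝ) - 1), -(b:ℝ), -((s:ℝ)+1); -(s:ℝ), β - ((b:ℝ) - 1), 0; -(s:ℝ), 0, β] with hM3
  have hdetP : M3.det = polyP s n β := by
    rw [hM3, Matrix.det_fin_three]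
    norm_num [Matrix.cons_val_zero, Matrix.cons_val_one, Matrix.head_cons, Matrix.vecHead,
      Matrix.vecTail, Matrix.cons_val_two]
    unfold polyP
    rw [hnR]
    ring
  have hdet : M3.det = 0 := by rw [hdetP, hβroot]
  obtain ⟨v, hvne, hv⟩ := Matrix.exists_mulVec_eq_zero_iff.mpr hdet
  have e0 := congrFun hv 0
  have e1 := congrFun hv 1
  have e2 := congrFun hv 2
  simp [hM3, Matrix.mulVec, dotProduct, Fin.sum_univ_three] at e0 e1 e2
  set g : ℕ → ℝ := fun k => if k < s then v 0 else if k < s + b then v 1 else v 2 with hg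
  set w : Fin (s+b+(s+1)) → ℝ := fun j => g (j:ℕ) with hw
  have hgA : ∀ k ∈ Finset.range s, g k = v 0 := by
    intro k hk
    rw [Finset.mem_range] at hk
    simp only [hg]
    rw [if_pos hk]
  have hgB : ∀ k ∈ Finset.Ico s (s+b), g k = v 1 := by
    intro k hk
    rw [Finset.mem_Ico] at hk
    simp only [hg]
    rw [if_neg (by omega), if_pos (by omega)]
  have hgC : ∀ k ∈ Finset.Ico (s+b) (s+b+(s+1)), g k = v 2 := by
    intro k hk
    rw [Finset.mem_Ico] at hk
    simp only [hg]
    rw [if_neg (by omega), if_neg (by omega)]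
  have hSA : ∑ j ∈ Finset.filter (fun j : Fin (s+b+(s+1)) => (j:ℕ) < s) univ, w j
      = (s:ℝ) * v 0 := by
    simp only [hw]
    rw [sum_filter_fin (s+b+(s+1)) (fun k => k < s) g, hfilter1,
      Finset.sum_congr rfl hgA, Finset.sum_const, Finset.card_range, nsmul_eq_mul]
  have hSAB : ∑ j ∈ Finset.filter (fun j : Fin (s+b+(s+1)) => (j:ℕ) < s + b) univ, w j
      = (s:ℝ) * v 0 + (b:ℝ) * v 1 := by
    simp only [hw]
    rw [sum_filter_fin (s+b+(s+1)) (fun k => k < s + b) g, hfilter2]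
    rw [Finset.range_eq_Ico, ← Finset.sum_Ico_consecutive g (Nat.zero_le s) (Nat.le_add_right s b)]
    rw [← Finset.range_eq_Ico]
    rw [Finset.sum_congr rfl hgA, Finset.sum_congr rfl hgB, Finset.sum_const, Finset.sum_const,
      Finset.card_range, Nat.card_Ico, nsmul_eq_mul, nsmul_eq_mul]
    have hsb : s + b - s = b := by omega
    rw [hsb]
  have hSC : ∑ j ∈ Finset.filter (fun j : Fin (s+b+(s+1)) => ¬ (j:ℕ) < s + b) univ, w j
      = ((s:ℝ) + 1) * v 2 := by
    simp only [hw]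
    rw [sum_filter_fin (s+b+(s+1)) (fun k => ¬ k < s + b) g, hfilter3,
      Finset.sum_congr rfl hgC, Finset.sum_const, Nat.card_Ico, nsmul_eq_mul]
    have hsb : s + b + (s+1) - (s+b) = s+1 := by omega
    rw [hsb]
    push_cast
    ring
  have hAw : (Matrix.of fun x y => if (jGraph s b (s+1)).Adj x y then (1:ℝ) else 0).mulVec w
      = β • w := by
    funext i
    rw [mulVec_jGraph s b (s+1) w i]
    rw [hSA, hSAB, hSC]
    simp only [Pi.smul_apply, smul_eq_mul]
    by_cases hiA : (i:ℕ) < s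
    · have hiAB : (i:ℕ) < s + b := by omega
      rw [if_pos hiAB, if_pos hiA]
      have hwi : w i = v 0 := by simp only [hw, hg]; rw [if_pos hiA]
      rw [hwi]
      linarith [e0]
    · by_cases hiB : (i:ℕ) < s + b
      · rw [if_pos hiB, if_neg hiA]
        have hwi : w i = v 1 := by simp only [hw, hg]; rw [if_neg hiA, if_pos hiB]
        rw [hwi]
        linarith [e1]
      · rw [if_neg hiB, if_neg hiA]
        have hwi : w i = v 2 := by simp only [hw, hg]; rw [if_neg hiA, if_neg hiB]
        rw [hwi]
        linarith [e2]
  have hwne : w ≠ 0 := by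
    obtain ⟨k, hk⟩ := Function.ne_iff.mp hvne
    intro h0
    apply hk
    fin_cases k
    · have h1 := congrFun h0 (⟨0, by omega⟩ : Fin (s+b+(s+1)))
      simp only [hw, hg, Pi.zero_apply] at h1
      rw [if_pos (show ((⟨0, by omega⟩ : Fin (s+b+(s+1))):ℕ) < s from hs)] at h1
      exact h1
    · have h1 := congrFun h0 (⟨s, by omega⟩ : Fin (s+b+(s+1)))
      simp only [hw, hg, Pi.zero_apply] at h1
      rw [if_neg (by simp), if_pos (by simp; omega)] at h1
      exact h1
    · have h1 := congrFun h0 (⟨s+b, by omega⟩ : Fin (s+b+(s+1)))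
      simp only [hw, hg, Pi.zero_apply] at h1
      rw [if_neg (by simp), if_neg (by simp)] at h1
      exact h1
  refine Module.End.hasEigenvalue_of_hasEigenvector ⟨Module.End.mem_eigenspace_iff.mpr ?_, hwne⟩
  rw [Matrix.toLin'_apply]
  exact hAw


set_option maxHeartbeats 1000000 in
lemma partII (s b n : ℕ) (hs : 1 ≤ s) (hb1 : 1 ≤ b)
    (hnR : (n:ℝ) = (b:ℝ) + 2*(s:ℝ) + 1) (lam : ℝ)
    (hl : Module.End.HasEigenvalue (Matrix.toLin'
      (Matrix.of fun i j => if (jGraph s b (s+1)).Adj i j then (1:ℝ) else 0)) lam) :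
    lam = -1 ∨ lam = 0 ∨ polyP s n lam = 0 := by
  have hfilter1 : (Finset.range (s+b+(s+1))).filter (fun k => k < s) = Finset.range s := by
    ext k; simp only [Finset.mem_filter, Finset.mem_range]; omega
  have hfilter2 : (Finset.range (s+b+(s+1))).filter (fun k => k < s + b) = Finset.range (s+b) := by
    ext k; simp only [Finset.mem_filter, Finset.mem_range]; omega
  have hfilter3 : (Finset.range (s+b+(s+1))).filter (fun k => ¬ k < s + b)
      = Finset.Ico (s+b) (s+b+(s+1)) := by
    ext k; simp only [Finset.mem_filter, Finset.mem_range, Finset.mem_Ico]; omega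
  obtain ⟨u, hmem, hune⟩ := hl.exists_hasEigenvector
  have hAu : (Matrix.of fun i j => if (jGraph s b (s+1)).Adj i j then (1:ℝ) else 0).mulVec u
      = lam • u := by
    rw [← Matrix.toLin'_apply]
    exact Module.End.mem_eigenspace_iff.mp hmem
  set TA := Finset.filter (fun j : Fin (s+b+(s+1)) => (j:ℕ) < s) univ with hTA
  set TAB := Finset.filter (fun j : Fin (s+b+(s+1)) => (j:ℕ) < s + b) univ with hTAB
  set TC := Finset.filter (fun j : Fin (s+b+(s+1)) => ¬ (j:ℕ) < s + b) univ with hTC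
  set SA := ∑ j ∈ TA, u j with hSA
  set SAB := ∑ j ∈ TAB, u j with hSAB
  set SC := ∑ j ∈ TC, u j with hSC
  have hcardA : TA.card = s := by
    rw [hTA, card_filter_fin (s+b+(s+1)) (fun k => k < s), hfilter1, Finset.card_range]
  have hcardAB : TAB.card = s + b := by
    rw [hTAB, card_filter_fin (s+b+(s+1)) (fun k => k < s + b), hfilter2, Finset.card_range]
  have hcardC : TC.card = s + 1 := by
    rw [hTC, card_filter_fin (s+b+(s+1)) (fun k => ¬ k < s + b), hfilter3, Nat.card_Ico]
    omega
  have hcardABA : (TAB.filter (fun i : Fin (s+b+(s+1)) => (i:ℕ) < s)).card = s := by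
    rw [hTAB, Finset.filter_filter,
      card_filter_fin (s+b+(s+1)) (fun k => k < s + b ∧ k < s)]
    have h5 : (Finset.range (s+b+(s+1))).filter (fun k => k < s + b ∧ k < s)
        = Finset.range s := by
      ext k; simp only [Finset.mem_filter, Finset.mem_range]; omega
    rw [h5, Finset.card_range]
  have heq : ∀ i : Fin (s+b+(s+1)), lam * u i
      = (if (i:ℕ) < s + b then SAB - u i else SA) + (if (i:ℕ) < s then SC else 0) := by
    intro i
    have h0 := mulVec_jGraph s b (s+1) u i
    rw [hAu] at h0
    simp only [Pi.smul_apply, smul_eq_mul] at h0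
    rw [← hTA, ← hTAB, ← hTC, ← hSA, ← hSAB, ← hSC] at h0
    exact h0
  have E1 : lam * SA = (s:ℝ) * (SAB + SC) - SA := by
    have h1 : ∑ i ∈ TA, (lam * u i) = ∑ i ∈ TA, (SAB + SC - u i) := by
      apply Finset.sum_congr rfl
      intro i hi
      rw [hTA, Finset.mem_filter] at hi
      have hiA : (i:ℕ) < s := hi.2
      have hiAB : (i:ℕ) < s + b := by omega
      rw [heq i, if_pos hiAB, if_pos hiA]
      ring
    rw [← Finset.mul_sum, ← hSA] at h1
    rw [Finset.sum_sub_distrib, Finset.sum_const, ← hSA, hcardA, nsmul_eq_mul] at h1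
    linarith [h1]
  have E2 : lam * SAB = ((s:ℝ) + (b:ℝ)) * SAB - SAB + (s:ℝ) * SC := by
    have h1 : ∑ i ∈ TAB, (lam * u i)
        = ∑ i ∈ TAB, (SAB - u i + (if (i:ℕ) < s then SC else 0)) := by
      apply Finset.sum_congr rfl
      intro i hi
      rw [hTAB, Finset.mem_filter] at hi
      rw [heq i, if_pos hi.2]
    rw [← Finset.mul_sum, ← hSAB] at h1
    rw [Finset.sum_add_distrib, Finset.sum_sub_distrib, Finset.sum_const, ← hSAB, hcardAB,
      ← Finset.sum_filter, Finset.sum_const, hcardABA, nsmul_eq_mul, nsmul_eq_mul] at h1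
    push_cast at h1
    linarith [h1]
  have E3 : lam * SC = ((s:ℝ) + 1) * SA := by
    have h1 : ∑ i ∈ TC, (lam * u i) = ∑ i ∈ TC, SA := by
      apply Finset.sum_congr rfl
      intro i hi
      rw [hTC, Finset.mem_filter] at hi
      have h2 : ¬ (i:ℕ) < s := by omega
      rw [heq i, if_neg hi.2, if_neg h2]
      ring
    rw [← Finset.mul_sum, ← hSC] at h1
    rw [Finset.sum_const, hcardC, nsmul_eq_mul] at h1
    push_cast at h1
    linarith [h1]
  by_cases hz : SA = 0 ∧ SAB = 0 ∧ SC = 0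
  · obtain ⟨hz1, hz2, hz3⟩ := hz
    obtain ⟨i, hi⟩ := Function.ne_iff.mp hune
    have h := heq i
    by_cases hiB : (i:ℕ) < s + b
    · left
      rw [if_pos hiB, hz2, hz3] at h
      have h2 : (lam + 1) * u i = 0 := by
        by_cases hiA : (i:ℕ) < s
        · rw [if_pos hiA] at h; ring_nf; ring_nf at h; linarith [h]
        · rw [if_neg hiA] at h; ring_nf; ring_nf at h; linarith [h]
      rcases mul_eq_zero.mp h2 with h3 | h3
      · linarith
      · exact absurd h3 hi
    · right; left
      rw [if_neg hiB, hz1] at h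
      have hiA : ¬ (i:ℕ) < s := by omega
      rw [if_neg hiA, add_zero] at h
      rcases mul_eq_zero.mp h with h3 | h3
      · exact h3
      · exact absurd h3 hi
  · right; right
    set M5 : Matrix (Fin 3) (Fin 3) ℝ :=
      !![lam + 1, -(s:ℝ), -(s:ℝ); 0, lam - (s:ℝ) - (b:ℝ) + 1, -(s:ℝ); -((s:ℝ)+1), 0, lam] with hM5
    have hker : M5.mulVec ![SA, SAB, SC] = 0 := by
      funext k
      fin_cases k
      · simp [hM5, Matrix.mulVec, dotProduct, Fin.sum_univ_three]
        linarith [E1]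
      · simp [hM5, Matrix.mulVec, dotProduct, Fin.sum_univ_three]
        linarith [E2]
      · simp [hM5, Matrix.mulVec, dotProduct, Fin.sum_univ_three]
        linarith [E3]
    have hne : ![SA, SAB, SC] ≠ 0 := by
      intro h0
      apply hz
      refine ⟨?_, ?_, ?_⟩
      · have := congrFun h0 0; simpa using this
      · have := congrFun h0 1; simpa using this
      · have := congrFun h0 2; simpa using this
    have hdet0 : M5.det = 0 := Matrix.exists_mulVec_eq_zero_iff.mp ⟨![SA, SAB, SC], hne, hker⟩
    have hdetP : M5.det = polyP s n lam := by
      rw [hM5, Matrix.det_fin_three]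
      norm_num [Matrix.cons_val_zero, Matrix.cons_val_one, Matrix.head_cons, Matrix.vecHead,
        Matrix.vecTail, Matrix.cons_val_two]
      unfold polyP
      rw [hnR]
      ring
    rw [← hdetP, hdet0]

/-- For `s ≥ 1` and `n ≥ 2s+2`, the spectral radius of `K_s ∨ (K_{n−2s−1} + (s+1)K_1)`
is the largest root of
`P(x) = x³ − (n−s−3)x² − (s²+n−2)x − 2s³ + ns² − 4s² + ns − 2s`. -/
theorem stmt18 (s n : ℕ) (hs : 1 ≤ s) (hn : 2 * s + 2 ≤ n) :
    ((specRad (jGraph s (n - 2 * s - 1) (s + 1))) ^ 3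
        - ((n : ℝ) - s - 3) * (specRad (jGraph s (n - 2 * s - 1) (s + 1))) ^ 2
        - ((s : ℝ) ^ 2 + (n : ℝ) - 2) * specRad (jGraph s (n - 2 * s - 1) (s + 1))
        - 2 * (s : ℝ) ^ 3 + (n : ℝ) * (s : ℝ) ^ 2 - 4 * (s : ℝ) ^ 2
        + (n : ℝ) * (s : ℝ) - 2 * (s : ℝ)) = 0 ∧
    ∀ x : ℝ,
      (x ^ 3 - ((n : ℝ) - s - 3) * x ^ 2 - ((s : ℝ) ^ 2 + (n : ℝ) - 2) * x
        - 2 * (s : ℝ) ^ 3 + (n : ℝ) * (s : ℝ) ^ 2 - 4 * (s : ℝ) ^ 2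
        + (n : ℝ) * (s : ℝ) - 2 * (s : ℝ)) = 0 →
      x ≤ specRad (jGraph s (n - 2 * s - 1) (s + 1)) := by
  have hs1 : (1:ℝ) ≤ (s:ℝ) := by exact_mod_cast hs
  have hn0 : (0:ℝ) ≤ (n:ℝ) := Nat.cast_nonneg n
  set b : ℕ := n - 2 * s - 1 with hbdef
  have hb1 : 1 ≤ b := by omega
  have hbn : b + 2 * s + 1 = n := by omega
  have hnR : (n:ℝ) = (b:ℝ) + 2 * (s:ℝ) + 1 := by
    have := congrArg (Nat.cast : ℕ → ℝ) hbn
    push_cast at this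
    linarith
  -- the roots set of the cubic
  set R : Set ℝ := {x : ℝ | polyP s n x = 0} with hRdef
  have hcont : Continuous (polyP s n) := by
    unfold polyP; fun_prop
  have hclosed : IsClosed R := isClosed_eq hcont continuous_const
  -- upper bound for roots
  set K : ℝ := 1 + ((n:ℝ) + s + 3) + ((s:ℝ)^2 + n + 2)
      + (2*(s:ℝ)^3 + (n:ℝ)*(s:ℝ)^2 + 4*(s:ℝ)^2 + (n:ℝ)*(s:ℝ) + 2*(s:ℝ)) with hKdef
  have hns2 : (0:ℝ) ≤ (n:ℝ)*(s:ℝ)^2 := by positivity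
  have hns : (0:ℝ) ≤ (n:ℝ)*(s:ℝ) := by positivity
  have hs2 : (0:ℝ) ≤ (s:ℝ)^2 := sq_nonneg _
  have hs3 : (0:ℝ) ≤ (s:ℝ)^3 := by positivity
  have hK1 : (1:ℝ) ≤ K := by rw [hKdef]; nlinarith
  have hsK : (s:ℝ) ≤ K := by rw [hKdef]; nlinarith
  have hup : ∀ x : ℝ, K ≤ x → 0 < polyP s n x := by
    intro x hx
    have hx1 : (1:ℝ) ≤ x := le_trans hK1 hx
    have h2 : x ≤ x^2 := by nlinarith
    have h3 : (1:ℝ) ≤ x^2 := by nlinarith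
    have t1 : K * x^2 ≤ x * x^2 := mul_le_mul_of_nonneg_right hx (sq_nonneg x)
    have t4 : ((n:ℝ) - s - 3) * x^2 ≤ ((n:ℝ) + s + 3) * x^2 :=
      mul_le_mul_of_nonneg_right (by linarith) (sq_nonneg x)
    have t5 : ((s:ℝ)^2 + n - 2) * x ≤ ((s:ℝ)^2 + n + 2) * x :=
      mul_le_mul_of_nonneg_right (by linarith) (by linarith)
    have t2 : ((s:ℝ)^2 + n + 2) * x ≤ ((s:ℝ)^2 + n + 2) * x^2 :=
      mul_le_mul_of_nonneg_left h2 (by positivity)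
    have t3 : (2*(s:ℝ)^3 + (n:ℝ)*(s:ℝ)^2 + 4*(s:ℝ)^2 + (n:ℝ)*(s:ℝ) + 2*(s:ℝ)) * 1
        ≤ (2*(s:ℝ)^3 + (n:ℝ)*(s:ℝ)^2 + 4*(s:ℝ)^2 + (n:ℝ)*(s:ℝ) + 2*(s:ℝ)) * x^2 :=
      mul_le_mul_of_nonneg_left h3 (by positivity)
    unfold polyP
    rw [hKdef] at t1
    nlinarith [t1, t2, t3, t4, t5, sq_nonneg x]
  have hRK : ∀ x ∈ R, x ≤ K := by
    intro x hx
    by_contra h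
    push_neg at h
    have := hup x (le_of_lt h)
    rw [hRdef] at hx
    simp only [Set.mem_setOf_eq] at hx
    linarith
  have hbdd : BddAbove R := ⟨K, fun x hx => hRK x hx⟩
  -- a root exists, in [s, K]
  have hfs : polyP s n (s:ℝ) < 0 := by
    have : polyP s n (s:ℝ) = -(s:ℝ)^3 - (s:ℝ)^2 := by unfold polyP; ring
    rw [this]; nlinarith
  have hfK : (0:ℝ) ≤ polyP s n K := le_of_lt (hup K le_rfl)
  obtain ⟨x₀, hx₀m, hx₀⟩ := intermediate_value_Icc hsK hcont.continuousOn ⟨le_of_lt hfs, hfK⟩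
  have hx₀R : x₀ ∈ R := by rw [hRdef]; exact hx₀
  have hRne : R.Nonempty := ⟨x₀, hx₀R⟩
  set β : ℝ := sSup R with hβdef
  have hβroot : polyP s n β = 0 := hclosed.csSup_mem hRne hbdd
  have hβs : (s:ℝ) ≤ β := le_trans hx₀m.1 (le_csSup hbdd hx₀R)
  have hroot_le : ∀ x : ℝ, polyP s n x = 0 → x ≤ β := fun x hx => le_csSup hbdd hx
  -- the eigenvalue set
  set A : Matrix (Fin (s+b+(s+1))) (Fin (s+b+(s+1))) ℝ :=
    Matrix.of fun i j => if (jGraph s b (s+1)).Adj i j then (1:ℝ) else 0 with hAdef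
  set E : Set ℝ := {x : ℝ | Module.End.HasEigenvalue (Matrix.toLin' A) x} with hEdef
  have hspec : specRad (jGraph s b (s+1)) = sSup E := rfl
  -- block sums of a constant-by-block vector
  have hfilter1 : (Finset.range (s+b+(s+1))).filter (fun k => k < s) = Finset.range s := by
    ext k; simp [Finset.mem_filter, Finset.mem_range]; omega
  have hfilter2 : (Finset.range (s+b+(s+1))).filter (fun k => k < s + b) = Finset.range (s+b) := by
    ext k; simp [Finset.mem_filter, Finset.mem_range]; omega
  have hfilter3 : (Finset.range (s+b+(s+1))).filter (fun k => ¬ k < s + b)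
      = Finset.Ico (s+b) (s+b+(s+1)) := by
    ext k; simp [Finset.mem_filter, Finset.mem_range, Finset.mem_Ico]; omega
  -- part (i): β is an eigenvalue
  have hβE : β ∈ E := by
    simp only [hEdef, Set.mem_setOf_eq, hAdef]
    exact partI s b n hs hb1 hnR β hβroot
  -- part (ii): every eigenvalue is at most β
  have hE_le : ∀ x ∈ E, x ≤ β := by
    intro x hx
    simp only [hEdef, Set.mem_setOf_eq, hAdef] at hx
    rcases partII s b n hs hb1 hnR x hx with h | h | h
    · linarith
    · linarith
    · exact hroot_le x h
  have hspecβ : specRad (jGraph s b (s+1)) = β := by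
    rw [hspec]
    exact le_antisymm (csSup_le ⟨β, hβE⟩ hE_le) (le_csSup ⟨β, fun x hx => hE_le x hx⟩ hβE)
  constructor
  · show polyP s n (specRad (jGraph s b (s+1))) = 0
    rw [hspecβ]; exact hβroot
  · intro x hx
    have : polyP s n x = 0 := hx
    rw [hspecβ]
    exact hroot_le x this
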